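/- For unitaries U_1,…,U_N, V_1,…,V_N in U(D), a Hermitian matrix H, and ρ_0 = |φ_0⟩⟨φ_0|, the partial Euclidean gradient ∇_{U_h}g = (U_1⋯U_{h−1})†H U_1⋯U_N ρ_0 (U_{h+1}⋯U_N)† of g(U_1,…,U_N) = trace(H·U_1⋯U_N ρ_0 U_N†⋯U_1†) satisfies ‖∇_{U_h}g(U_1,…,U_N) − ∇_{U_h}g(V_1,…,V_N)‖_F ≤ 2‖H‖ Σ_{b=1}^N ‖U_b − V_b‖_F. -/

import Mathlib

open Matrix BigOperators
open scoped Matrix.Norms.L2Operator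

noncomputable section

/-- Frobenius norm. -/
def frob {D : ℕ} (A : Matrix (Fin D) (Fin D) ℂ) : ℝ :=
  Real.sqrt (∑ i, ∑ j, Complex.normSq (A i j))

/-- Ordered product `U_a ⋯ U_{b-1}` of the layer unitaries (0-based indices). -/
def layerProd {D N : ℕ} (U : Fin N → Matrix (Fin D) (Fin D) ℂ) (a b : ℕ) :
    Matrix (Fin D) (Fin D) ℂ :=
  ((((List.finRange N).drop a).take (b - a)).map U).prod

/-- Partial Euclidean gradient
`∇_{U_h} g = (U_0⋯U_{h−1})† H (U_0⋯U_{N−1}) ρ₀ (U_{h+1}⋯U_{N−1})†`. -/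
def egrad {D N : ℕ} (H ρ : Matrix (Fin D) (Fin D) ℂ)
    (U : Fin N → Matrix (Fin D) (Fin D) ℂ) (h : Fin N) : Matrix (Fin D) (Fin D) ℂ :=
  (layerProd U 0 h)ᴴ * H * layerProd U 0 N * ρ * (layerProd U (h + 1) N)ᴴ

namespace MGLaux

variable {D N : ℕ}

/-- Euclidean norm of a vector. -/
def en {D : ℕ} (x : Fin D → ℂ) : ℝ :=
  Real.sqrt (∑ i, Complex.normSq (x i))

lemma sum_normSq_nonneg (x : Fin D → ℂ) : 0 ≤ ∑ i, Complex.normSq (x i) :=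
  Finset.sum_nonneg fun _ _ => Complex.normSq_nonneg _

lemma sum2_normSq_nonneg (A : Matrix (Fin D) (Fin D) ℂ) :
    0 ≤ ∑ i, ∑ j, Complex.normSq (A i j) :=
  Finset.sum_nonneg fun _ _ => sum_normSq_nonneg _

lemma en_nonneg (x : Fin D → ℂ) : 0 ≤ en x := Real.sqrt_nonneg _

lemma frob_nonneg (A : Matrix (Fin D) (Fin D) ℂ) : 0 ≤ frob A := Real.sqrt_nonneg _

lemma en_eq (x : Fin D → ℂ) :
    en x = ‖(WithLp.equiv 2 (Fin D → ℂ)).symm x‖ := by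
  rw [EuclideanSpace.norm_eq, en]
  congr 1
  refine Finset.sum_congr rfl fun i _ => ?_
  rw [Complex.normSq_eq_norm_sq]; rfl

lemma en_add_le (x y : Fin D → ℂ) : en (x + y) ≤ en x + en y := by
  rw [en_eq, en_eq, en_eq]
  exact norm_add_le ((WithLp.equiv 2 (Fin D → ℂ)).symm x) ((WithLp.equiv 2 (Fin D → ℂ)).symm y)

lemma en_star (x : Fin D → ℂ) : en (star x) = en x := by
  simp [en, Pi.star_apply, Complex.star_def, Complex.normSq_conj]

lemma frob_eq (A : Matrix (Fin D) (Fin D) ℂ) :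
    frob A = ‖(WithLp.equiv 2 (Fin D × Fin D → ℂ)).symm (fun p => A p.1 p.2)‖ := by
  rw [EuclideanSpace.norm_eq, Fintype.sum_prod_type, frob]
  congr 1
  refine Finset.sum_congr rfl fun i _ => Finset.sum_congr rfl fun j _ => ?_
  rw [Complex.normSq_eq_norm_sq]; rfl

lemma frob_add_le (A B : Matrix (Fin D) (Fin D) ℂ) : frob (A + B) ≤ frob A + frob B := by
  rw [frob_eq, frob_eq, frob_eq]
  have h : (WithLp.equiv 2 (Fin D × Fin D → ℂ)).symm (fun p => (A + B) p.1 p.2)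
      = (WithLp.equiv 2 (Fin D × Fin D → ℂ)).symm (fun p => A p.1 p.2)
        + (WithLp.equiv 2 (Fin D × Fin D → ℂ)).symm (fun p => B p.1 p.2) := rfl
  rw [h]
  exact norm_add_le _ _

lemma frob_conjTranspose (A : Matrix (Fin D) (Fin D) ℂ) : frob Aᴴ = frob A := by
  rw [frob, frob, Finset.sum_comm]
  simp [conjTranspose_apply, Complex.normSq_conj]

lemma frob_vecMulVec (u v : Fin D → ℂ) : frob (vecMulVec u v) = en u * en v := by
  rw [frob, en, en, ← Real.sqrt_mul (sum_normSq_nonneg u)]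
  congr 1
  rw [Finset.sum_mul_sum]
  refine Finset.sum_congr rfl fun i _ => Finset.sum_congr rfl fun j _ => ?_
  rw [vecMulVec_apply, Complex.normSq_mul]

/-- Cauchy–Schwarz: `‖M x‖ ≤ ‖M‖_F ‖x‖`. -/
lemma en_mulVec_le_frob (M : Matrix (Fin D) (Fin D) ℂ) (x : Fin D → ℂ) :
    en (M *ᵥ x) ≤ frob M * en x := by
  have key : ∀ i, Complex.normSq ((M *ᵥ x) i)
      ≤ (∑ j, Complex.normSq (M i j)) * ∑ j, Complex.normSq (x j) := by
    intro i
    set a : EuclideanSpace ℂ (Fin D) :=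
      (WithLp.equiv 2 (Fin D → ℂ)).symm (fun j => (starRingEnd ℂ) (M i j)) with ha
    set b : EuclideanSpace ℂ (Fin D) := (WithLp.equiv 2 (Fin D → ℂ)).symm x with hb
    have hab : inner ℂ a b = (M *ᵥ x) i := by
      simp [PiLp.inner_apply, ha, hb, RCLike.inner_apply, mulVec, dotProduct,
        WithLp.equiv_symm_apply, mul_comm]
    have h1 : ‖(M *ᵥ x) i‖ ≤ ‖a‖ * ‖b‖ := by
      rw [← hab]; exact norm_inner_le_norm a b
    have hna : ‖a‖ = Real.sqrt (∑ j, Complex.normSq (M i j)) := by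
      rw [← en_eq]
      simp [en, Complex.normSq_conj]
    have hnb : ‖b‖ = Real.sqrt (∑ j, Complex.normSq (x j)) := by
      rw [← en_eq]; rfl
    have h2 := mul_self_le_mul_self (norm_nonneg ((M *ᵥ x) i)) h1
    have h3 : ‖(M *ᵥ x) i‖ * ‖(M *ᵥ x) i‖ = Complex.normSq ((M *ᵥ x) i) := by
      rw [← Complex.sq_norm, sq]
    rw [h3, hna, hnb] at h2
    calc Complex.normSq ((M *ᵥ x) i)
        ≤ Real.sqrt (∑ j, Complex.normSq (M i j)) * Real.sqrt (∑ j, Complex.normSq (x j)) *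
          (Real.sqrt (∑ j, Complex.normSq (M i j)) * Real.sqrt (∑ j, Complex.normSq (x j))) := h2
      _ = (∑ j, Complex.normSq (M i j)) * ∑ j, Complex.normSq (x j) := by
          rw [show ∀ p q r s : ℝ, p * q * (r * s) = (p * r) * (q * s) by intros; ring,
            Real.mul_self_sqrt (sum_normSq_nonneg fun j => M i j),
            Real.mul_self_sqrt (sum_normSq_nonneg x)]
  have h4 : ∑ i, Complex.normSq ((M *ᵥ x) i)
      ≤ (∑ i, ∑ j, Complex.normSq (M i j)) * ∑ j, Complex.normSq (x j) := by
    rw [Finset.sum_mul]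
    exact Finset.sum_le_sum fun i _ => key i
  rw [en, en, frob, ← Real.sqrt_mul (sum2_normSq_nonneg M)]
  exact Real.sqrt_le_sqrt h4

lemma en_mulVec_le_op (M : Matrix (Fin D) (Fin D) ℂ) (x : Fin D → ℂ) :
    en (M *ᵥ x) ≤ ‖M‖ * en x := by
  rw [en_eq, en_eq]
  exact M.l2_opNorm_mulVec ((WithLp.equiv 2 (Fin D → ℂ)).symm x)

lemma frob_mul_le_op (M Y : Matrix (Fin D) (Fin D) ℂ) :
    frob (M * Y) ≤ ‖M‖ * frob Y := by
  have key : ∀ j, (∑ i, Complex.normSq ((M * Y) i j))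
      ≤ ‖M‖ ^ 2 * ∑ i, Complex.normSq (Y i j) := by
    intro j
    have hcol : (M *ᵥ fun k => Y k j) = fun i => (M * Y) i j := by
      funext i
      simp [mulVec, dotProduct, Matrix.mul_apply]
    have h1 := en_mulVec_le_op M (fun k => Y k j)
    rw [hcol] at h1
    have h2 := mul_self_le_mul_self (en_nonneg _) h1
    rw [en, en, Real.mul_self_sqrt (sum_normSq_nonneg _)] at h2
    calc (∑ i, Complex.normSq ((M * Y) i j))
        ≤ ‖M‖ * Real.sqrt (∑ i, Complex.normSq (Y i j)) *
            (‖M‖ * Real.sqrt (∑ i, Complex.normSq (Y i j))) := h2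
      _ = ‖M‖ ^ 2 * ∑ i, Complex.normSq (Y i j) := by
          rw [show ∀ p q : ℝ, p * q * (p * q) = (p * p) * (q * q) by intros; ring,
            Real.mul_self_sqrt (sum_normSq_nonneg fun i => Y i j), sq]
  have h4 : ∑ i, ∑ j, Complex.normSq ((M * Y) i j)
      ≤ ‖M‖ ^ 2 * ∑ i, ∑ j, Complex.normSq (Y i j) := by
    rw [Finset.sum_comm, Finset.sum_comm (γ := Fin D) (f := fun i j => Complex.normSq (Y i j)),
      Finset.mul_sum]
    exact Finset.sum_le_sum fun j _ => key j
  rw [frob, frob]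
  calc Real.sqrt (∑ i, ∑ j, Complex.normSq ((M * Y) i j))
      ≤ Real.sqrt (‖M‖ ^ 2 * ∑ i, ∑ j, Complex.normSq (Y i j)) := Real.sqrt_le_sqrt h4
    _ = ‖M‖ * Real.sqrt (∑ i, ∑ j, Complex.normSq (Y i j)) := by
        rw [Real.sqrt_mul (by positivity), Real.sqrt_sq (norm_nonneg M)]

lemma frob_mul_le_op' (X W : Matrix (Fin D) (Fin D) ℂ) :
    frob (X * W) ≤ frob X * ‖W‖ := by
  calc frob (X * W) = frob ((X * W)ᴴ) := (frob_conjTranspose _).symm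
    _ = frob (Wᴴ * Xᴴ) := by rw [conjTranspose_mul]
    _ ≤ ‖Wᴴ‖ * frob Xᴴ := frob_mul_le_op _ _
    _ = frob X * ‖W‖ := by rw [Matrix.l2_opNorm_conjTranspose, frob_conjTranspose, mul_comm]

lemma norm_one_le : ‖(1 : Matrix (Fin D) (Fin D) ℂ)‖ ≤ 1 := by
  have h1 : (toEuclideanCLM (n := Fin D) (𝕜 := ℂ)) 1 = 1 := _root_.map_one _
  rw [Matrix.cstar_norm_def, h1]
  exact ContinuousLinearMap.norm_id_le

lemma unitary_norm_le {W : Matrix (Fin D) (Fin D) ℂ}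
    (hW : W ∈ Matrix.unitaryGroup (Fin D) ℂ) : ‖W‖ ≤ 1 := by
  have h2 : ‖Wᴴ * W‖ = ‖W‖ * ‖W‖ := Matrix.l2_opNorm_conjTranspose_mul_self W
  have h3 : Wᴴ * W = 1 := hW.1
  rw [h3] at h2
  have h4 : ‖(1 : Matrix (Fin D) (Fin D) ℂ)‖ ≤ 1 := norm_one_le
  nlinarith [norm_nonneg W]

lemma prod_norm_le_one (W : Fin N → Matrix (Fin D) (Fin D) ℂ)
    (hW : ∀ k, ‖W k‖ ≤ 1) : ∀ ℓ : List (Fin N), ‖(ℓ.map W).prod‖ ≤ 1 := by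
  intro ℓ
  induction ℓ with
  | nil => simpa using (norm_one_le (D := D))
  | cons a ℓ ih =>
    calc ‖((a :: ℓ).map W).prod‖ = ‖W a * (ℓ.map W).prod‖ := by simp
      _ ≤ ‖W a‖ * ‖(ℓ.map W).prod‖ := Matrix.l2_opNorm_mul _ _
      _ ≤ 1 := mul_le_one₀ (hW a) (norm_nonneg _) ih

lemma telescope (U V : Fin N → Matrix (Fin D) (Fin D) ℂ)
    (hU : ∀ k, ‖U k‖ ≤ 1) (hV : ∀ k, ‖V k‖ ≤ 1) :
    ∀ ℓ : List (Fin N),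
      frob ((ℓ.map U).prod - (ℓ.map V).prod) ≤ (ℓ.map fun k => frob (U k - V k)).sum := by
  intro ℓ
  induction ℓ with
  | nil => simp [frob]
  | cons a ℓ ih =>
    have hdec : U a * (ℓ.map U).prod - V a * (ℓ.map V).prod
        = (U a - V a) * (ℓ.map U).prod + V a * ((ℓ.map U).prod - (ℓ.map V).prod) := by
      noncomm_ring
    have h1 : frob ((U a - V a) * (ℓ.map U).prod) ≤ frob (U a - V a) := by
      calc frob ((U a - V a) * (ℓ.map U).prod)
          ≤ frob (U a - V a) * ‖(ℓ.map U).prod‖ := frob_mul_le_op' _ _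
        _ ≤ frob (U a - V a) * 1 :=
            mul_le_mul_of_nonneg_left (prod_norm_le_one U hU ℓ) (frob_nonneg _)
        _ = frob (U a - V a) := mul_one _
    have h2 : frob (V a * ((ℓ.map U).prod - (ℓ.map V).prod))
        ≤ (ℓ.map fun k => frob (U k - V k)).sum := by
      calc frob (V a * ((ℓ.map U).prod - (ℓ.map V).prod))
          ≤ ‖V a‖ * frob ((ℓ.map U).prod - (ℓ.map V).prod) := frob_mul_le_op _ _
        _ ≤ 1 * frob ((ℓ.map U).prod - (ℓ.map V).prod) :=
            mul_le_mul_of_nonneg_right (hV a) (frob_nonneg _)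
        _ = frob ((ℓ.map U).prod - (ℓ.map V).prod) := one_mul _
        _ ≤ (ℓ.map fun k => frob (U k - V k)).sum := ih
    calc frob (((a :: ℓ).map U).prod - ((a :: ℓ).map V).prod)
        = frob ((U a - V a) * (ℓ.map U).prod
            + V a * ((ℓ.map U).prod - (ℓ.map V).prod)) := by
          simp only [List.map_cons, List.prod_cons]
          rw [hdec]
      _ ≤ frob ((U a - V a) * (ℓ.map U).prod)
            + frob (V a * ((ℓ.map U).prod - (ℓ.map V).prod)) := frob_add_le _ _
      _ ≤ frob (U a - V a) + (ℓ.map fun k => frob (U k - V k)).sum := add_le_add h1 h2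
      _ = ((a :: ℓ).map fun k => frob (U k - V k)).sum := by simp

lemma mul_vecMulVec (M : Matrix (Fin D) (Fin D) ℂ) (u v : Fin D → ℂ) :
    M * vecMulVec u v = vecMulVec (M *ᵥ u) v := by
  ext i j
  simp [Matrix.mul_apply, vecMulVec_apply, mulVec, dotProduct, Finset.sum_mul, mul_assoc]

lemma vecMulVec_mul (u v : Fin D → ℂ) (M : Matrix (Fin D) (Fin D) ℂ) :
    vecMulVec u v * M = vecMulVec u (v ᵥ* M) := by
  ext i j
  simp [Matrix.mul_apply, vecMulVec_apply, vecMul, dotProduct, Finset.mul_sum, mul_assoc]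

end MGLaux

open MGLaux

/-- Lipschitz bound for the partial Euclidean gradient of the
product-unitary objective:
`‖∇_{U_h}g(U) − ∇_{U_h}g(V)‖_F ≤ 2‖H‖ Σ_b ‖U_b − V_b‖_F`. -/
theorem multilayer_grad_lipschitz (D N : ℕ)
    (H : Matrix (Fin D) (Fin D) ℂ) (hH : H.IsHermitian)
    (φ0 : Fin D → ℂ) (hφ0 : star φ0 ⬝ᵥ φ0 = 1)
    (U V : Fin N → Matrix (Fin D) (Fin D) ℂ)
    (hU : ∀ b, U b ∈ Matrix.unitaryGroup (Fin D) ℂ)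
    (hV : ∀ b, V b ∈ Matrix.unitaryGroup (Fin D) ℂ)
    (h : Fin N) :
    frob (egrad H (vecMulVec φ0 (star φ0)) U h - egrad H (vecMulVec φ0 (star φ0)) V h)
      ≤ 2 * ‖H‖ * ∑ b, frob (U b - V b) := by
  classical
  have hUop : ∀ k, ‖U k‖ ≤ 1 := fun k => unitary_norm_le (hU k)
  have hVop : ∀ k, ‖V k‖ ≤ 1 := fun k => unitary_norm_le (hV k)
  -- norm of the initial state
  have hφsq : ∑ i, Complex.normSq (φ0 i) = 1 := by
    have h1 : ∑ i, (Complex.normSq (φ0 i) : ℂ) = 1 := by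
      rw [← hφ0]
      refine (Finset.sum_congr rfl fun i _ => ?_).symm
      rw [Pi.star_apply, Complex.star_def, ← Complex.normSq_eq_conj_mul_self]
    exact_mod_cast h1
  have hφ : en φ0 = 1 := by rw [en, hφsq, Real.sqrt_one]
  -- abbreviations
  set f : Fin N → ℝ := fun k => frob (U k - V k) with hf
  set S : ℝ := ∑ b, f b with hSdef
  set ℓA : List (Fin N) := (((List.finRange N).drop 0).take ((h : ℕ) - 0)) with hlA
  set ℓB : List (Fin N) := (((List.finRange N).drop 0).take (N - 0)) with hlB
  set ℓC : List (Fin N) := (((List.finRange N).drop ((h : ℕ) + 1)).take (N - ((h : ℕ) + 1)))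
    with hlC
  set SA : ℝ := (ℓA.map f).sum with hSA
  set SB : ℝ := (ℓB.map f).sum with hSB
  set SC : ℝ := (ℓC.map f).sum with hSC
  have hfnn : ∀ k, 0 ≤ f k := fun k => frob_nonneg _
  have hSAnn : 0 ≤ SA := List.sum_nonneg (by
    intro x hx; obtain ⟨k, -, rfl⟩ := List.mem_map.1 hx; exact hfnn k)
  have hSBnn : 0 ≤ SB := List.sum_nonneg (by
    intro x hx; obtain ⟨k, -, rfl⟩ := List.mem_map.1 hx; exact hfnn k)
  have hSCnn : 0 ≤ SC := List.sum_nonneg (by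
    intro x hx; obtain ⟨k, -, rfl⟩ := List.mem_map.1 hx; exact hfnn k)
  have hS_eq : S = ((List.finRange N).map f).sum := Fin.sum_univ_def f
  have hnnList : ∀ x ∈ (List.finRange N).map f, (0:ℝ) ≤ x := by
    intro x hx; obtain ⟨k, -, rfl⟩ := List.mem_map.1 hx; exact hfnn k
  -- sum over sublists
  have hAC : SA + SC ≤ S := by
    have h2 : ℓC = (List.finRange N).drop ((h : ℕ) + 1) := by
      rw [hlC]
      exact List.take_of_length_le (by simp)
    have h1 : List.Sublist ℓA (List.take ((h : ℕ) + 1) (List.finRange N)) := by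
      rw [hlA]
      have h4 := List.take_sublist ((h : ℕ) - 0) (List.take ((h : ℕ)+1) (List.finRange N))
      rw [List.take_take, min_eq_left (by omega)] at h4
      rw [List.drop_zero]
      exact h4
    have hsub : List.Sublist (ℓA ++ ℓC) (List.finRange N) := by
      rw [h2, ← List.take_append_drop ((h : ℕ)+1) (List.finRange N)]
      have h3 := h1.append_right ((List.finRange N).drop ((h : ℕ) + 1))
      simpa using h3
    calc SA + SC = ((ℓA ++ ℓC).map f).sum := by rw [List.map_append, List.sum_append]
      _ ≤ ((List.finRange N).map f).sum := List.Sublist.sum_le_sum (hsub.map f) hnnList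
      _ = S := hS_eq.symm
  have hBS : SB ≤ S := by
    have hsub : List.Sublist ℓB (List.finRange N) := by
      rw [hlB, List.drop_zero]
      exact List.take_sublist _ _
    calc SB ≤ ((List.finRange N).map f).sum := List.Sublist.sum_le_sum (hsub.map f) hnnList
      _ = S := hS_eq.symm
  -- telescoping bounds
  have hA : frob (layerProd U 0 (h : ℕ) - layerProd V 0 (h : ℕ)) ≤ SA :=
    telescope U V hUop hVop ℓA
  have hB : frob (layerProd U 0 N - layerProd V 0 N) ≤ SB :=
    telescope U V hUop hVop ℓB
  have hC : frob (layerProd U ((h : ℕ) + 1) N - layerProd V ((h : ℕ) + 1) N) ≤ SC :=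
    telescope U V hUop hVop ℓC
  have hAU : ‖layerProd U 0 (h : ℕ)‖ ≤ 1 := prod_norm_le_one U hUop _
  have hAV : ‖layerProd V 0 (h : ℕ)‖ ≤ 1 := prod_norm_le_one V hVop _
  have hBU : ‖layerProd U 0 N‖ ≤ 1 := prod_norm_le_one U hUop _
  have hBV : ‖layerProd V 0 N‖ ≤ 1 := prod_norm_le_one V hVop _
  have hCU : ‖layerProd U ((h : ℕ) + 1) N‖ ≤ 1 := prod_norm_le_one U hUop _
  have hCV : ‖layerProd V ((h : ℕ) + 1) N‖ ≤ 1 := prod_norm_le_one V hVop _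
  -- the rank-one form of the gradient
  set aU : Fin D → ℂ := ((layerProd U 0 (h : ℕ))ᴴ * H * layerProd U 0 N) *ᵥ φ0 with haU
  set aV : Fin D → ℂ := ((layerProd V 0 (h : ℕ))ᴴ * H * layerProd V 0 N) *ᵥ φ0 with haV
  set cU : Fin D → ℂ := layerProd U ((h : ℕ) + 1) N *ᵥ φ0 with hcUdef
  set cV : Fin D → ℂ := layerProd V ((h : ℕ) + 1) N *ᵥ φ0 with hcVdef
  have egrad_eq : ∀ W : Fin N → Matrix (Fin D) (Fin D) ℂ,
      egrad H (vecMulVec φ0 (star φ0)) W h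
        = vecMulVec (((layerProd W 0 (h : ℕ))ᴴ * H * layerProd W 0 N) *ᵥ φ0)
            (star (layerProd W ((h : ℕ) + 1) N *ᵥ φ0)) := by
    intro W
    rw [egrad, mul_vecMulVec, vecMulVec_mul, vecMul_conjTranspose, star_star]
  -- vector norm bounds
  have hencU : en cU ≤ 1 := by
    calc en cU ≤ ‖layerProd U ((h : ℕ) + 1) N‖ * en φ0 := en_mulVec_le_op _ _
      _ ≤ 1 * 1 := by rw [hφ]; exact mul_le_mul_of_nonneg_right hCU zero_le_one
      _ = 1 := one_mul 1
  have henBU : en (H *ᵥ (layerProd U 0 N *ᵥ φ0)) ≤ ‖H‖ := by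
    calc en (H *ᵥ (layerProd U 0 N *ᵥ φ0))
        ≤ ‖H‖ * en (layerProd U 0 N *ᵥ φ0) := en_mulVec_le_op _ _
      _ ≤ ‖H‖ * (1 * 1) := by
          refine mul_le_mul_of_nonneg_left ?_ (norm_nonneg H)
          calc en (layerProd U 0 N *ᵥ φ0) ≤ ‖layerProd U 0 N‖ * en φ0 := en_mulVec_le_op _ _
            _ ≤ 1 * 1 := by rw [hφ]; exact mul_le_mul_of_nonneg_right hBU zero_le_one
      _ = ‖H‖ := by ring
  have henaV : en aV ≤ ‖H‖ := by
    rw [haV, ← mulVec_mulVec, ← mulVec_mulVec]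
    calc en ((layerProd V 0 (h : ℕ))ᴴ *ᵥ (H *ᵥ (layerProd V 0 N *ᵥ φ0)))
        ≤ ‖(layerProd V 0 (h : ℕ))ᴴ‖ * en (H *ᵥ (layerProd V 0 N *ᵥ φ0)) := en_mulVec_le_op _ _
      _ ≤ 1 * (‖H‖ * (1 * 1)) := by
          refine mul_le_mul ?_ ?_ (en_nonneg _) zero_le_one
          · rw [Matrix.l2_opNorm_conjTranspose]; exact hAV
          · calc en (H *ᵥ (layerProd V 0 N *ᵥ φ0))
                ≤ ‖H‖ * en (layerProd V 0 N *ᵥ φ0) := en_mulVec_le_op _ _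
              _ ≤ ‖H‖ * (1 * 1) := by
                  refine mul_le_mul_of_nonneg_left ?_ (norm_nonneg H)
                  calc en (layerProd V 0 N *ᵥ φ0)
                      ≤ ‖layerProd V 0 N‖ * en φ0 := en_mulVec_le_op _ _
                    _ ≤ 1 * 1 := by rw [hφ]; exact mul_le_mul_of_nonneg_right hBV zero_le_one
      _ = ‖H‖ := by ring
  have hencUV : en (cU - cV) ≤ SC := by
    have hsub : cU - cV
        = (layerProd U ((h : ℕ) + 1) N - layerProd V ((h : ℕ) + 1) N) *ᵥ φ0 :=
      (Matrix.sub_mulVec _ _ _).symm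
    rw [hsub]
    calc en ((layerProd U ((h : ℕ) + 1) N - layerProd V ((h : ℕ) + 1) N) *ᵥ φ0)
        ≤ frob (layerProd U ((h : ℕ) + 1) N - layerProd V ((h : ℕ) + 1) N) * en φ0 :=
          en_mulVec_le_frob _ _
      _ ≤ SC := by rw [hφ, mul_one]; exact hC
  have henaUV : en (aU - aV) ≤ ‖H‖ * (SA + SB) := by
    have hmat : (layerProd U 0 (h : ℕ))ᴴ * H * layerProd U 0 N
          - (layerProd V 0 (h : ℕ))ᴴ * H * layerProd V 0 N
        = (layerProd U 0 (h : ℕ) - layerProd V 0 (h : ℕ))ᴴ * H * layerProd U 0 N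
          + (layerProd V 0 (h : ℕ))ᴴ * H * (layerProd U 0 N - layerProd V 0 N) := by
      rw [conjTranspose_sub]; noncomm_ring
    have hsplit : aU - aV
        = ((layerProd U 0 (h : ℕ) - layerProd V 0 (h : ℕ))ᴴ * H * layerProd U 0 N) *ᵥ φ0
          + ((layerProd V 0 (h : ℕ))ᴴ * H * (layerProd U 0 N - layerProd V 0 N)) *ᵥ φ0 := by
      rw [haU, haV, ← Matrix.sub_mulVec, hmat, Matrix.add_mulVec]
    have ht1 : en (((layerProd U 0 (h : ℕ) - layerProd V 0 (h : ℕ))ᴴ * H * layerProd U 0 N)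
        *ᵥ φ0) ≤ SA * ‖H‖ := by
      rw [← mulVec_mulVec, ← mulVec_mulVec]
      calc en ((layerProd U 0 (h : ℕ) - layerProd V 0 (h : ℕ))ᴴ
              *ᵥ (H *ᵥ (layerProd U 0 N *ᵥ φ0)))
          ≤ frob ((layerProd U 0 (h : ℕ) - layerProd V 0 (h : ℕ))ᴴ)
              * en (H *ᵥ (layerProd U 0 N *ᵥ φ0)) := en_mulVec_le_frob _ _
        _ ≤ SA * ‖H‖ := by
            rw [frob_conjTranspose]
            exact mul_le_mul hA henBU (en_nonneg _) hSAnn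
    have ht2 : en (((layerProd V 0 (h : ℕ))ᴴ * H * (layerProd U 0 N - layerProd V 0 N))
        *ᵥ φ0) ≤ ‖H‖ * SB := by
      rw [← mulVec_mulVec, ← mulVec_mulVec]
      calc en ((layerProd V 0 (h : ℕ))ᴴ
              *ᵥ (H *ᵥ ((layerProd U 0 N - layerProd V 0 N) *ᵥ φ0)))
          ≤ ‖(layerProd V 0 (h : ℕ))ᴴ‖
              * en (H *ᵥ ((layerProd U 0 N - layerProd V 0 N) *ᵥ φ0)) := en_mulVec_le_op _ _
        _ ≤ 1 * (‖H‖ * (SB * 1)) := by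
            refine mul_le_mul ?_ ?_ (en_nonneg _) zero_le_one
            · rw [Matrix.l2_opNorm_conjTranspose]; exact hAV
            · calc en (H *ᵥ ((layerProd U 0 N - layerProd V 0 N) *ᵥ φ0))
                  ≤ ‖H‖ * en ((layerProd U 0 N - layerProd V 0 N) *ᵥ φ0) :=
                    en_mulVec_le_op _ _
                _ ≤ ‖H‖ * (SB * 1) := by
                    refine mul_le_mul_of_nonneg_left ?_ (norm_nonneg H)
                    calc en ((layerProd U 0 N - layerProd V 0 N) *ᵥ φ0)
                        ≤ frob (layerProd U 0 N - layerProd V 0 N) * en φ0 :=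
                          en_mulVec_le_frob _ _
                      _ ≤ SB * 1 := by rw [hφ]; exact mul_le_mul_of_nonneg_right hB zero_le_one
        _ = ‖H‖ * SB := by ring
    calc en (aU - aV) ≤ en (((layerProd U 0 (h : ℕ) - layerProd V 0 (h : ℕ))ᴴ * H
            * layerProd U 0 N) *ᵥ φ0)
          + en (((layerProd V 0 (h : ℕ))ᴴ * H * (layerProd U 0 N - layerProd V 0 N)) *ᵥ φ0) := by
          rw [hsplit]; exact en_add_le _ _
      _ ≤ SA * ‖H‖ + ‖H‖ * SB := add_le_add ht1 ht2
      _ = ‖H‖ * (SA + SB) := by ring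
  -- assemble
  have hmain : vecMulVec aU (star cU) - vecMulVec aV (star cV)
      = vecMulVec (aU - aV) (star cU) + vecMulVec aV (star (cU - cV)) := by
    ext i j
    simp only [Matrix.sub_apply, Matrix.add_apply, vecMulVec_apply, Pi.sub_apply,
      Pi.star_apply, star_sub]
    ring
  calc frob (egrad H (vecMulVec φ0 (star φ0)) U h - egrad H (vecMulVec φ0 (star φ0)) V h)
      = frob (vecMulVec (aU - aV) (star cU) + vecMulVec aV (star (cU - cV))) := by
        rw [egrad_eq U, egrad_eq V, ← haU, ← haV, ← hcUdef, ← hcVdef, hmain]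
    _ ≤ frob (vecMulVec (aU - aV) (star cU)) + frob (vecMulVec aV (star (cU - cV))) :=
        frob_add_le _ _
    _ = en (aU - aV) * en cU + en aV * en (cU - cV) := by
        rw [frob_vecMulVec, frob_vecMulVec, en_star, en_star]
    _ ≤ (‖H‖ * (SA + SB)) * 1 + ‖H‖ * SC := by
        refine add_le_add ?_ ?_
        · exact mul_le_mul henaUV hencU (en_nonneg _)
            (mul_nonneg (norm_nonneg H) (by linarith))
        · exact mul_le_mul henaV hencUV (en_nonneg _) (norm_nonneg H)
    _ ≤ 2 * ‖H‖ * S := by nlinarith [norm_nonneg H, hAC, hBS]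

end
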